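/- For small categories C and D, there is an equivalence of categories φ : Fun^R(C,D) → (Fun^L(D,C))ᵒᵖ, from the full subcategory of Fun(C,D) spanned by the right-adjoint functors to the opposite of the full subcategory of Fun(D,C) spanned by the left-adjoint functors, such that for every object g of Fun^R(C,D) there is an adjunction φ(g) ⊣ g, i.e., φ takes each right-adjoint functor g : C → D to a left adjoint of g. -/

import Mathlib

open CategoryTheory

/-- For small categories `C` and `D`, there is an equivalence of categories
`φ : Fun^R(C,D) → (Fun^L(D,C))ᵒᵖ` from the full subcategory of `Fun(C,D)` spanned by the
right-adjoint functors to the opposite of the full subcategory of `Fun(D,C)` spanned by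
the left-adjoint functors, taking each right-adjoint functor `g` to a left adjoint of `g`. -/
theorem rightAdjoints_equiv_op_leftAdjoints
    (C : Type u) (D : Type v) [SmallCategory C] [SmallCategory D] :
    ∃ φ : ObjectProperty.FullSubcategory (fun F : C ⥤ D => F.IsRightAdjoint) ⥤
        (ObjectProperty.FullSubcategory (fun G : D ⥤ C => G.IsLeftAdjoint))ᵒᵖ,
      φ.IsEquivalence ∧
        ∀ g : ObjectProperty.FullSubcategory (fun F : C ⥤ D => F.IsRightAdjoint),
          Nonempty ((φ.obj g).unop.obj ⊣ g.obj) := by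
  classical
  let L : ∀ g : ObjectProperty.FullSubcategory (fun F : C ⥤ D => F.IsRightAdjoint), D ⥤ C :=
    fun g => g.property.exists_leftAdjoint.choose
  let adj : ∀ g, L g ⊣ g.obj :=
    fun g => g.property.exists_leftAdjoint.choose_spec.some
  let φ : ObjectProperty.FullSubcategory (fun F : C ⥤ D => F.IsRightAdjoint) ⥤
      (ObjectProperty.FullSubcategory (fun G : D ⥤ C => G.IsLeftAdjoint))ᵒᵖ :=
    { obj := fun g => Opposite.op ⟨L g, ⟨⟨g.obj, ⟨adj g⟩⟩⟩⟩
      map := fun {g g'} f =>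
        Quiver.Hom.op (ObjectProperty.homMk (P := fun G : D ⥤ C => G.IsLeftAdjoint) ((conjugateEquiv (adj g) (adj g')).symm
          (show g.obj ⟶ g'.obj from f.hom)))
      map_id := fun g => congrArg Quiver.Hom.op (ObjectProperty.hom_ext _ (conjugateEquiv_symm_id (adj g)))
      map_comp := fun {g g' g''} f f' => congrArg Quiver.Hom.op (ObjectProperty.hom_ext _
        (conjugateEquiv_symm_comp (adj g) (adj g') (adj g'') f.hom f'.hom).symm) }
  have hfull : φ.Full := ⟨fun {g g'} f =>
    ⟨ObjectProperty.homMk (show g.obj ⟶ g'.obj from conjugateEquiv (adj g) (adj g') f.unop.hom), by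
      show Quiver.Hom.op (ObjectProperty.homMk (P := fun G : D ⥤ C => G.IsLeftAdjoint) ((conjugateEquiv (adj g) (adj g')).symm
        ((conjugateEquiv (adj g) (adj g')) f.unop.hom))) = f
      rw [Equiv.symm_apply_apply]
      rfl⟩⟩
  have hfaithful : φ.Faithful := ⟨fun {g g'} f f' h => by
    have := congrArg Quiver.Hom.unop h
    exact ObjectProperty.hom_ext _ ((conjugateEquiv (adj g) (adj g')).symm.injective (congrArg (fun x => x.hom) this))⟩
  have hes : φ.EssSurj := by
    constructor
    intro G
    obtain ⟨R, ⟨adjR⟩⟩ := G.unop.property.exists_rightAdjoint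
    refine ⟨⟨R, ⟨⟨G.unop.obj, ⟨adjR⟩⟩⟩⟩, ?_⟩
    have u : G.unop.obj ≅ L ⟨R, ⟨⟨G.unop.obj, ⟨adjR⟩⟩⟩⟩ :=
      Adjunction.leftAdjointUniq adjR (adj ⟨R, ⟨⟨G.unop.obj, ⟨adjR⟩⟩⟩⟩)
    have k : (G.unop : ObjectProperty.FullSubcategory (fun G : D ⥤ C => G.IsLeftAdjoint)) ≅
        ⟨L ⟨R, ⟨⟨G.unop.obj, ⟨adjR⟩⟩⟩⟩, ⟨⟨R, ⟨adj _⟩⟩⟩⟩ :=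
      ObjectProperty.isoMk (P := fun G : D ⥤ C => G.IsLeftAdjoint) u
    exact ⟨k.op⟩
  refine ⟨φ, ?_, fun g => ⟨adj g⟩⟩
  exact { full := hfull, faithful := hfaithful, essSurj := hes }
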